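/- Let p ≥ 1 and 0 ≤ m ≤ p−2 be integers. Then there exists a unique real number υ > arccosh(3/2) such that φ(υ)/υ = (m+1)/p, where φ(u) = arccosh(cosh u − 1/2); moreover, for u > arccosh(3/2), φ(u)/u > (m+1)/p holds if and only if u > υ, and φ(u)/u < (m+1)/p if and only if u < υ. Furthermore υ < √p. -/

import Mathlib

open Set

noncomputable def arcosh (x : ℝ) : ℝ := Real.log (x + Real.sqrt (x ^ 2 - 1))

noncomputable def kappa : ℝ := arcosh (3 / 2)

noncomputable def phi (u : ℝ) : ℝ := arcosh (Real.cosh u - 1 / 2)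

lemma arg_pos {x : ℝ} (hx : 1 ≤ x) : 0 < x + Real.sqrt (x ^ 2 - 1) := by
  nlinarith [Real.sqrt_nonneg (x ^ 2 - 1)]

lemma cosh_arcosh {x : ℝ} (hx : 1 ≤ x) : Real.cosh (arcosh x) = x := by
  have h1 : (0:ℝ) ≤ x ^ 2 - 1 := by nlinarith
  have hs : Real.sqrt (x ^ 2 - 1) ^ 2 = x ^ 2 - 1 := Real.sq_sqrt h1
  have hy := arg_pos hx
  rw [arcosh, Real.cosh_eq, Real.exp_log hy, Real.exp_neg, Real.exp_log hy]
  have hy' : x + Real.sqrt (x ^ 2 - 1) ≠ 0 := ne_of_gt hy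
  field_simp
  nlinarith [hs]

lemma arcosh_nonneg {x : ℝ} (hx : 1 ≤ x) : 0 ≤ arcosh x := by
  apply Real.log_nonneg
  nlinarith [Real.sqrt_nonneg (x ^ 2 - 1)]

lemma kappa_pos : 0 < kappa := by
  apply Real.log_pos
  nlinarith [Real.sqrt_nonneg ((3/2:ℝ) ^ 2 - 1)]

lemma kappa_lt_one : kappa < 1 := by
  rw [kappa, arcosh, Real.log_lt_iff_lt_exp (arg_pos (by norm_num))]
  have h1 : Real.sqrt ((3/2:ℝ) ^ 2 - 1) < 9/8 := by
    rw [show ((3/2:ℝ) ^ 2 - 1) = 5/4 by norm_num]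
    rw [show (9/8:ℝ) = Real.sqrt ((9/8)^2) by rw [Real.sqrt_sq]; norm_num]
    exact Real.sqrt_lt_sqrt (by norm_num) (by norm_num)
  have h2 : (2.7182818283:ℝ) < Real.exp 1 := Real.exp_one_gt_d9
  nlinarith

lemma cosh_kappa : Real.cosh kappa = 3 / 2 := cosh_arcosh (by norm_num)

lemma one_lt_arg {u : ℝ} (hu : kappa < u) : 1 < Real.cosh u - 1 / 2 := by
  have : Real.cosh kappa < Real.cosh u := by
    rw [Real.cosh_lt_cosh, abs_of_pos kappa_pos, abs_of_pos (kappa_pos.trans hu)]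
    exact hu
  rw [cosh_kappa] at this; linarith

lemma hasDerivAt_arcosh {x : ℝ} (hx : 1 < x) :
    HasDerivAt arcosh (1 / Real.sqrt (x ^ 2 - 1)) x := by
  have h1 : (0:ℝ) < x ^ 2 - 1 := by nlinarith
  have hs : 0 < Real.sqrt (x ^ 2 - 1) := Real.sqrt_pos.2 h1
  have hsq : Real.sqrt (x ^ 2 - 1) ^ 2 = x ^ 2 - 1 := Real.sq_sqrt h1.le
  have d1 : HasDerivAt (fun y : ℝ => y ^ 2 - 1) (2 * x) x := by
    simpa using (hasDerivAt_pow 2 x).sub_const 1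
  have d2 : HasDerivAt (fun y : ℝ => Real.sqrt (y ^ 2 - 1))
      (1 / (2 * Real.sqrt (x ^ 2 - 1)) * (2 * x)) x :=
    (Real.hasDerivAt_sqrt h1.ne').comp x d1
  have d3 : HasDerivAt (fun y : ℝ => y + Real.sqrt (y ^ 2 - 1))
      (1 + 1 / (2 * Real.sqrt (x ^ 2 - 1)) * (2 * x)) x := (hasDerivAt_id x).add d2
  have hy : (0:ℝ) < x + Real.sqrt (x ^ 2 - 1) := arg_pos hx.le
  have d4 := (Real.hasDerivAt_log hy.ne').comp x d3
  have harc : arcosh = fun y : ℝ => Real.log (y + Real.sqrt (y ^ 2 - 1)) := rfl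
  rw [harc]
  refine d4.congr_deriv ?_
  have hsne : Real.sqrt (x ^ 2 - 1) ≠ 0 := hs.ne'
  field_simp
  nlinarith [hsq, hs, hy]

lemma phi_hasDerivAt {u : ℝ} (hu : kappa < u) :
    HasDerivAt phi (1 / Real.sqrt ((Real.cosh u - 1 / 2) ^ 2 - 1) * Real.sinh u) u := by
  have hx := one_lt_arg hu
  have d1 : HasDerivAt (fun v : ℝ => Real.cosh v - 1 / 2) (Real.sinh u) u :=
    (Real.hasDerivAt_cosh u).sub_const _
  exact (hasDerivAt_arcosh hx).comp u d1

lemma continuousOn_arcosh : ContinuousOn arcosh (Ici 1) := by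
  intro x hx
  have hy : (0:ℝ) < x + Real.sqrt (x ^ 2 - 1) := arg_pos hx
  have hf : Continuous fun y : ℝ => y + Real.sqrt (y ^ 2 - 1) :=
    continuous_id.add (Real.continuous_sqrt.comp ((continuous_pow 2).sub continuous_const))
  exact (hf.continuousAt.log hy.ne').continuousWithinAt

lemma continuousOn_phi : ContinuousOn phi (Ici kappa) := by
  apply continuousOn_arcosh.comp ((Real.continuous_cosh.sub continuous_const).continuousOn)
  intro u hu
  rw [mem_Ici] at hu ⊢
  have : Real.cosh kappa ≤ Real.cosh u := by
    rw [Real.cosh_le_cosh, abs_of_pos kappa_pos, abs_of_nonneg (kappa_pos.le.trans hu)]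
    exact hu
  rw [cosh_kappa] at this; simp only [Pi.sub_apply]; linarith

lemma strictMonoG {q : ℝ} (hq0 : 0 < q) (hq1 : q < 1) :
    StrictMonoOn (fun u => phi u - q * u) (Ici kappa) := by
  apply strictMonoOn_of_deriv_pos (convex_Ici _)
  · exact continuousOn_phi.sub ((continuous_const.mul continuous_id).continuousOn)
  · intro x hx
    rw [interior_Ici, mem_Ioi] at hx
    have hd : HasDerivAt (fun u => phi u - q * u)
        (1 / Real.sqrt ((Real.cosh x - 1 / 2) ^ 2 - 1) * Real.sinh x - q * 1) x :=
      (phi_hasDerivAt hx).sub ((hasDerivAt_id x).const_mul q)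
    rw [hd.deriv]
    have hx1 := one_lt_arg hx
    have hX : (0:ℝ) < (Real.cosh x - 1 / 2) ^ 2 - 1 := by nlinarith
    have hsX : 0 < Real.sqrt ((Real.cosh x - 1 / 2) ^ 2 - 1) := Real.sqrt_pos.2 hX
    have hsinh : 0 < Real.sinh x := Real.sinh_pos_iff.2 (kappa_pos.trans hx)
    have hlt : Real.sqrt ((Real.cosh x - 1 / 2) ^ 2 - 1) < Real.sinh x := by
      have h1 : (Real.cosh x - 1 / 2) ^ 2 - 1 < Real.sinh x ^ 2 := by
        have := Real.sinh_sq x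
        nlinarith [Real.one_le_cosh x]
      calc Real.sqrt ((Real.cosh x - 1 / 2) ^ 2 - 1) < Real.sqrt (Real.sinh x ^ 2) :=
            Real.sqrt_lt_sqrt hX.le h1
        _ = Real.sinh x := by rw [Real.sqrt_sq hsinh.le]
    have : 1 < 1 / Real.sqrt ((Real.cosh x - 1 / 2) ^ 2 - 1) * Real.sinh x := by
      rw [one_div, inv_mul_eq_div, lt_div_iff₀ hsX]
      linarith
    linarith

lemma cosh_lower {a b : ℝ} (ha : 0 ≤ a) (hab : a ≤ b) :
    Real.cosh a + (b - a) * Real.sinh a ≤ Real.cosh b := by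
  have h : Real.cosh b = Real.cosh (a + (b - a)) := by ring_nf
  rw [h, Real.cosh_add]
  have h1 : (1:ℝ) ≤ Real.cosh (b - a) := Real.one_le_cosh _
  have h2 : b - a ≤ Real.sinh (b - a) := Real.self_le_sinh_iff.2 (by linarith)
  have h3 : 0 ≤ Real.sinh a := Real.sinh_nonneg_iff.2 ha
  have h4 : (1:ℝ) ≤ Real.cosh a := Real.one_le_cosh a
  nlinarith

lemma cosh_ge {s : ℝ} (hs : 0 ≤ s) : 1 + s ^ 2 / 2 ≤ Real.cosh s := by
  have h : Real.cosh s = Real.cosh (2 * (s / 2)) := by ring_nf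
  rw [h, Real.cosh_two_mul, Real.cosh_sq]
  have h2 : s / 2 ≤ Real.sinh (s / 2) := Real.self_le_sinh_iff.2 (by linarith)
  nlinarith

lemma phi_kappa : phi kappa = 0 := by
  rw [phi, cosh_kappa]
  norm_num [arcosh]

set_option maxHeartbeats 1000000 in
theorem exists_unique_upsilon (p m : ℕ) (hp : 1 ≤ p) (hm : (m : ℤ) ≤ (p : ℤ) - 2) :
    ∃ υ : ℝ, kappa < υ ∧ phi υ / υ = ((m : ℝ) + 1) / p ∧
      (∀ υ' : ℝ, kappa < υ' → phi υ' / υ' = ((m : ℝ) + 1) / p → υ' = υ) ∧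
      (∀ u : ℝ, kappa < u →
        (((m : ℝ) + 1) / p < phi u / u ↔ υ < u) ∧
        (phi u / u < ((m : ℝ) + 1) / p ↔ u < υ)) ∧
      υ < Real.sqrt p := by
  have hp2 : 2 ≤ p := by omega
  have hpR : (0:ℝ) < p := by positivity
  have hpR2 : (2:ℝ) ≤ p := by exact_mod_cast hp2
  set q : ℝ := ((m : ℝ) + 1) / p with hqdef
  have hq0 : 0 < q := by positivity
  have hmR : (m : ℝ) + 1 ≤ (p : ℝ) - 1 := by
    have : (m : ℝ) ≤ (p : ℝ) - 2 := by exact_mod_cast hm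
    linarith
  have hq1' : q * p ≤ (p:ℝ) - 1 := by
    rw [hqdef, div_mul_cancel₀ _ hpR.ne']; exact hmR
  have hq1 : q < 1 := by
    rw [hqdef, div_lt_one hpR]; linarith
  set s : ℝ := Real.sqrt p with hsdef
  have hsq : s ^ 2 = p := Real.sq_sqrt hpR.le
  have hs1 : 1 ≤ s := by nlinarith [Real.sqrt_nonneg (p:ℝ)]
  have hs0 : 0 < s := by linarith
  have hks : kappa < s := kappa_lt_one.trans_le hs1
  -- the bound phi s > s - 1/s
  set a : ℝ := phi s with hadef
  have hx1 : 1 < Real.cosh s - 1 / 2 := one_lt_arg hks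
  have hca : Real.cosh a = Real.cosh s - 1 / 2 := cosh_arcosh hx1.le
  have ha0 : 0 ≤ a := arcosh_nonneg hx1.le
  have halt : a < s := by
    have : Real.cosh a < Real.cosh s := by rw [hca]; linarith
    rwa [Real.cosh_lt_cosh, abs_of_nonneg ha0, abs_of_pos hs0] at this
  have hsinh_nonneg : 0 ≤ Real.sinh a := Real.sinh_nonneg_iff.2 ha0
  have hsinh : s / 2 < Real.sinh a := by
    have hcs : 1 + s ^ 2 / 2 ≤ Real.cosh s := cosh_ge hs0.le
    have h1 : s ^ 2 / 4 < Real.sinh a ^ 2 := by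
      have := Real.sinh_sq a
      rw [hca] at this
      nlinarith
    nlinarith
  have hbound : s - 1 / s < a := by
    have hcl := cosh_lower ha0 halt.le
    rw [hca] at hcl
    -- (s - a) * sinh a ≤ 1/2
    have h2 : (s - a) * Real.sinh a ≤ 1 / 2 := by linarith
    have h3 : (s - a) * s < 1 := by nlinarith
    have h5 : s - a < 1 / s := (lt_div_iff₀ hs0).2 h3
    linarith
  -- G s > 0
  have hqs : q * s ≤ s - 1 / s := by
    have h4 : q * s * s ≤ s * s - 1 := by nlinarith [hq1', hsq]
    have h5 : 1 / s ≤ s - q * s := by rw [div_le_iff₀ hs0]; nlinarith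
    linarith
  have hGs : 0 < phi s - q * s := by linarith [hbound, hqs]
  have hGk : phi kappa - q * kappa < 0 := by
    rw [phi_kappa]
    have := mul_pos hq0 kappa_pos
    linarith
  -- IVT
  have hcont : ContinuousOn (fun u => phi u - q * u) (Icc kappa s) :=
    (continuousOn_phi.sub ((continuous_const.mul continuous_id).continuousOn)).mono
      (Icc_subset_Ici_self)
  have hmem : (0:ℝ) ∈ Ioo (phi kappa - q * kappa) (phi s - q * s) := ⟨hGk, hGs⟩
  obtain ⟨υ, hυmem, hυ0⟩ := intermediate_value_Ioo hks.le hcont hmem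
  have hG0 : phi υ - q * υ = 0 := hυ0
  have hυκ : kappa < υ := hυmem.1
  have hυs : υ < s := hυmem.2
  have hmono := strictMonoG hq0 hq1
  have hυpos : 0 < υ := kappa_pos.trans hυκ
  have hphiυ : phi υ = q * υ := by linarith [hG0]
  refine ⟨υ, hυκ, ?_, ?_, ?_, hυs⟩
  · rw [div_eq_iff hυpos.ne', hphiυ]
  · intro υ' hκ' heq
    have hυ'pos : 0 < υ' := kappa_pos.trans hκ'
    rw [div_eq_iff hυ'pos.ne'] at heq
    have : phi υ' - q * υ' = phi υ - q * υ := by rw [hphiυ, heq]; ring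
    exact hmono.injOn (mem_Ici.2 hκ'.le) (mem_Ici.2 hυκ.le) this
  · intro u hu
    have hupos : 0 < u := kappa_pos.trans hu
    have hlt : phi υ - q * υ < phi u - q * u ↔ υ < u :=
      hmono.lt_iff_lt (mem_Ici.2 hυκ.le) (mem_Ici.2 hu.le)
    have hlt' : phi u - q * u < phi υ - q * υ ↔ u < υ :=
      hmono.lt_iff_lt (mem_Ici.2 hu.le) (mem_Ici.2 hυκ.le)
    constructor
    · rw [lt_div_iff₀ hupos]
      constructor
      · intro h
        have : phi υ - q * υ < phi u - q * u := by rw [hG0]; linarith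
        exact hlt.1 this
      · intro h
        have := hlt.2 h
        rw [hG0] at this; linarith
    · rw [div_lt_iff₀ hupos]
      constructor
      · intro h
        have hlt2 : phi u - q * u < phi υ - q * υ := by rw [hG0]; linarith
        exact hlt'.1 hlt2
      · intro h
        have := hlt'.2 h
        rw [hG0] at this; linarith
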